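/- For any N×N real matrix K and any subset J of {1,...,N}, the alternating sum over subsets S of the complement of J of (-1)^{|S|} det(K_{J∪S}) equals (-1)^{N-|J|} det(K - 1_{J̄}), where K_T denotes the principal submatrix of K indexed by T and 1_{J̄} is the diagonal matrix with ones on the diagonal entries indexed by the complement of J and zeros elsewhere. -/

import Mathlib

open Matrix BigOperators

/-- Principal minor of `K` indexed by the subset `J`. -/
def pm {N : ℕ} (K : Matrix (Fin N) (Fin N) ℝ) (J : Finset (Fin N)) : ℝ :=
  (K.submatrix (fun i : J => (i : Fin N)) (fun j : J => (j : Fin N))).det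

/-- Diagonal 0/1 matrix supported on `J`. -/
def ind {N : ℕ} (J : Finset (Fin N)) : Matrix (Fin N) (Fin N) ℝ :=
  Matrix.diagonal (fun i => if i ∈ J then (1 : ℝ) else 0)

lemma pm_eq_of_agree {N : ℕ} {M K : Matrix (Fin N) (Fin N) ℝ} {T : Finset (Fin N)}
    (h : ∀ i ∈ T, ∀ j ∈ T, M i j = K i j) : pm M T = pm K T := by
  unfold pm
  congr 1
  ext i j
  exact h i i.2 j j.2

/-- If all rows of `M` indexed by `s` are standard basis vectors, the determinant of `M`
is the principal minor on the complement of `s`. -/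
lemma det_eq_pm_compl {N : ℕ} (M : Matrix (Fin N) (Fin N) ℝ) (s : Finset (Fin N))
    (h : ∀ i ∈ s, ∀ j, M i j = if i = j then (1 : ℝ) else 0) :
    M.det = pm M sᶜ := by
  classical
  let e : {x // x ∈ s} ⊕ {x // ¬ x ∈ s} ≃ Fin N := Equiv.sumCompl (· ∈ s)
  have h1 : M.submatrix e e = Matrix.fromBlocks 1 0
      (M.submatrix (fun i : {x // ¬ x ∈ s} => (i : Fin N)) (fun j : {x // x ∈ s} => (j : Fin N)))
      (M.submatrix (fun i : {x // ¬ x ∈ s} => (i : Fin N))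
        (fun j : {x // ¬ x ∈ s} => (j : Fin N))) := by
    ext i j
    cases i with
    | inl i =>
      cases j with
      | inl j =>
        simp only [Matrix.submatrix_apply, Matrix.fromBlocks_apply₁₁, e,
          Equiv.sumCompl_apply_inl, Matrix.one_apply]
        rw [h i i.2]
        exact if_congr Subtype.ext_iff.symm rfl rfl
      | inr j =>
        simp only [Matrix.submatrix_apply, Matrix.fromBlocks_apply₁₂, e,
          Equiv.sumCompl_apply_inl, Equiv.sumCompl_apply_inr, Matrix.zero_apply]
        rw [h i i.2]
        have : (i : Fin N) ≠ (j : Fin N) := by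
          intro hij
          exact j.2 (hij ▸ i.2)
        simp [this]
    | inr i =>
      cases j with
      | inl j => rfl
      | inr j => rfl
  have h2 : M.det = (M.submatrix (fun i : {x // ¬ x ∈ s} => (i : Fin N))
      (fun j : {x // ¬ x ∈ s} => (j : Fin N))).det := by
    rw [← Matrix.det_submatrix_equiv_self e M, h1, Matrix.det_fromBlocks_zero₁₂]
    simp
  rw [h2]
  unfold pm
  let e2 : {x // x ∈ sᶜ} ≃ {x // ¬ x ∈ s} :=
    Equiv.subtypeEquivRight (fun x => Finset.mem_compl)
  rw [← Matrix.det_submatrix_equiv_self e2]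
  rfl

/-- Multilinear expansion of `det (K - ind C)` over subsets of `C`. -/
lemma det_sub_ind {N : ℕ} (K : Matrix (Fin N) (Fin N) ℝ) (C : Finset (Fin N)) :
    (K - ind C).det = ∑ s ∈ C.powerset, (-1 : ℝ) ^ s.card * pm K sᶜ := by
  classical
  have hsplit : (K - ind C) = (-(ind C)) + K := by abel
  have hexp : (K - ind C).det
      = ∑ s : Finset (Fin N), Matrix.detRowAlternating (s.piecewise (-(ind C)) K) := by
    rw [hsplit]
    exact (Matrix.detRowAlternating.toMultilinearMap.map_add_univ (-(ind C)) K)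
  rw [hexp, ← Finset.sum_subset (Finset.subset_univ C.powerset)]
  · apply Finset.sum_congr rfl
    intro s hs
    rw [Finset.mem_powerset] at hs
    -- base matrix: rows in s are basis vectors, rows outside are K
    set B : Matrix (Fin N) (Fin N) ℝ :=
      s.piecewise (fun i j => if i = j then (1 : ℝ) else 0) K with hB
    have harg : s.piecewise (-(ind C)) K = s.piecewise (fun i => (-1 : ℝ) • B i) B := by
      funext i
      by_cases hi : i ∈ s
      · erw [Finset.piecewise_eq_of_mem _ _ _ hi, Finset.piecewise_eq_of_mem _ _ _ hi, hB,
          Finset.piecewise_eq_of_mem _ _ _ hi]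
        funext j
        have hiC : i ∈ C := hs hi
        simp [ind, Matrix.diagonal, hiC, Pi.smul_apply]
        by_cases hij : i = j <;> simp [hij, Matrix.diagonal_apply, eq_comm]
      · erw [Finset.piecewise_eq_of_notMem _ _ _ hi, Finset.piecewise_eq_of_notMem _ _ _ hi, hB,
          Finset.piecewise_eq_of_notMem _ _ _ hi]
    rw [harg]
    have hsmul : Matrix.detRowAlternating (s.piecewise (fun i => (-1 : ℝ) • B i) B)
        = (∏ _i ∈ s, (-1 : ℝ)) • Matrix.detRowAlternating B :=
      Matrix.detRowAlternating.toMultilinearMap.map_piecewise_smul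
        (fun _ : Fin N => (-1 : ℝ)) B s
    rw [hsmul]
    have hBdet : Matrix.detRowAlternating B = B.det := rfl
    have hBrows : ∀ i ∈ s, ∀ j, B i j = if i = j then (1 : ℝ) else 0 := by
      intro i hi j
      rw [hB]
      erw [Finset.piecewise_eq_of_mem _ _ _ hi]
    rw [hBdet, det_eq_pm_compl B s hBrows, pm_eq_of_agree (K := K)]
    · simp [smul_eq_mul]
    · intro i hi j hj
      erw [hB, Finset.piecewise_eq_of_notMem]
      exact Finset.mem_compl.mp hi
  · intro s _ hs
    rw [Finset.mem_powerset] at hs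
    obtain ⟨i, his, hiC⟩ := Finset.not_subset.mp hs
    have hrow : s.piecewise (-(ind C)) K i = 0 := by
      erw [Finset.piecewise_eq_of_mem _ _ _ his]
      funext j
      simp [ind, Matrix.diagonal_apply]
      intro hij
      exact hij ▸ hiC
    exact Matrix.det_eq_zero_of_row_eq_zero i (fun j => congrFun hrow j)

theorem stmt_0 {N : ℕ} (K : Matrix (Fin N) (Fin N) ℝ) (J : Finset (Fin N)) :
    ∑ S ∈ Jᶜ.powerset, (-1 : ℝ) ^ S.card * pm K (J ∪ S)
      = (-1 : ℝ) ^ (N - J.card) * (K - ind Jᶜ).det := by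
  classical
  rw [det_sub_ind, Finset.mul_sum]
  have hcard : Jᶜ.card = N - J.card := by
    rw [Finset.card_compl]
    simp
  refine Finset.sum_nbij' (fun S => Jᶜ \ S) (fun T => Jᶜ \ T) ?_ ?_ ?_ ?_ ?_
  · intro S hS
    rw [Finset.mem_powerset] at *
    exact Finset.sdiff_subset
  · intro T hT
    rw [Finset.mem_powerset] at *
    exact Finset.sdiff_subset
  · intro S hS
    rw [Finset.mem_powerset] at hS
    exact Finset.sdiff_sdiff_eq_self hS
  · intro T hT
    rw [Finset.mem_powerset] at hT
    exact Finset.sdiff_sdiff_eq_self hT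
  · intro S hS
    rw [Finset.mem_powerset] at hS
    have hset : (Jᶜ \ S)ᶜ = J ∪ S := by
      ext x
      simp only [Finset.mem_compl, Finset.mem_sdiff, Finset.mem_union]
      tauto
    rw [hset]
    have hle : S.card ≤ Jᶜ.card := Finset.card_le_card hS
    have hcard2 : (Jᶜ \ S).card = Jᶜ.card - S.card := Finset.card_sdiff_of_subset hS
    rw [hcard2, ← hcard, ← mul_assoc, ← pow_add]
    congr 1
    have : Jᶜ.card + (Jᶜ.card - S.card) = S.card + 2 * (Jᶜ.card - S.card) := by omega
    rw [this, pow_add, pow_mul]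
    norm_num
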